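/- arXiv:1706.08109 — 2 statements merged into one kernel-verified Lean document; each statement's English description precedes it below -/
import Mathlib

section
/- Let A be a finitely generated abelian group equipped with an action of ℤ/2, and suppose the coinvariants A_{ℤ/2} = A/⟨a - σ·a : a ∈ A⟩ form a finite group of odd order, where σ is the generator of ℤ/2. Then A is finite of odd order. -/
private lemma aux_fg_double_surj {A : Type*} [AddCommGroup A] (hfg : AddGroup.FG A)
    (hs : Function.Surjective fun a : A => a + a) : Finite A ∧ Odd (Nat.card A) := by
  obtain ⟨n, ι, fι, p, hp, e, ⟨f⟩⟩ := AddCommGroup.equiv_free_prod_directSum_zmod A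
  have hs' : Function.Surjective
      (fun x : (Fin n →₀ ℤ) × DirectSum ι (fun i => ZMod (p i ^ e i)) => x + x) := by
    intro y
    obtain ⟨a, ha⟩ := hs (f.symm y)
    exact ⟨f a, by simp only [← map_add, ha, f.apply_symm_apply]⟩
  have hn : n = 0 := by
    by_contra h
    obtain ⟨x, hx⟩ := hs' (Finsupp.single ⟨0, Nat.pos_of_ne_zero h⟩ 1, 0)
    have h1 := congrArg (fun y : (Fin n →₀ ℤ) × DirectSum ι (fun i => ZMod (p i ^ e i)) =>
      y.1 ⟨0, Nat.pos_of_ne_zero h⟩) hx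
    simp [Finsupp.single_eq_same] at h1
    omega
  subst hn
  haveI : IsEmpty (Fin 0) := inferInstance
  haveI : ∀ i, NeZero (p i ^ e i) := fun i => ⟨(pow_pos (hp i).pos _).ne'⟩
  haveI hF : Finite ((Fin 0 →₀ ℤ) × DirectSum ι (fun i => ZMod (p i ^ e i))) := by
    haveI : Finite (DirectSum ι (fun i => ZMod (p i ^ e i))) :=
      Finite.of_equiv _ DFinsupp.equivFunOnFintype.symm
    infer_instance
  haveI hFA : Finite A := Finite.of_equiv _ f.symm.toEquiv
  refine ⟨hFA, ?_⟩
  haveI : Fintype A := Fintype.ofFinite A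
  have hinj : Function.Injective fun a : A => a + a :=
    (Finite.injective_iff_surjective).mpr hs
  rw [← Nat.not_even_iff_odd]
  intro hev
  have hdvd : 2 ∣ Nat.card A := hev.two_dvd

  haveI : Fact (Nat.Prime 2) := ⟨Nat.prime_two⟩
  obtain ⟨x, hx⟩ := exists_prime_addOrderOf_dvd_card 2
    (by rwa [Nat.card_eq_fintype_card] at hdvd)
  have hx2 : x + x = 0 := by
    have := addOrderOf_nsmul_eq_zero (x := x)
    rw [hx, two_nsmul] at this; exact this
  have : x = 0 := hinj (a₁ := x) (a₂ := 0) (by simpa using hx2)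
  rw [this] at hx
  simp [addOrderOf_zero] at hx

/-- Let `A` be a finitely generated abelian group with an action of `ℤ/2`,
given by an involutive automorphism `σ`. If the coinvariants
`A ⧸ ⟨a - σ a : a ∈ A⟩` form a finite group of odd order, then `A` is finite of odd order. -/
theorem stmt_6 (A : Type*) [AddCommGroup A] (hfg : AddGroup.FG A)
    (σ : A ≃+ A) (hσ : ∀ a, σ (σ a) = a)
    (hfin : Finite (A ⧸ AddSubgroup.closure (Set.range fun a => a - σ a)))
    (hodd : Odd (Nat.card (A ⧸ AddSubgroup.closure (Set.range fun a => a - σ a)))) :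
    Finite A ∧ Odd (Nat.card A) := by
  set N := AddSubgroup.closure (Set.range fun a => a - σ a) with hN
  -- φ a = a - σ a is a homomorphism
  set φ : A →+ A := AddMonoidHom.mk' (fun a => a - σ a) (by
    intro a b; simp [map_add]; abel) with hφ
  have hNr : N = φ.range := by
    rw [hN]
    have : (Set.range fun a => a - σ a) = (φ.range : Set A) := by
      ext x; simp [hφ, AddMonoidHom.mem_range, eq_comm]
    rw [this, AddSubgroup.closure_eq]
  -- doubling is surjective on the quotient
  have hq : ∀ q : A ⧸ N, ∃ r : A ⧸ N, r + r = q := by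
    intro q
    obtain ⟨k, hk⟩ := hodd
    refine ⟨(k + 1) • q, ?_⟩
    have h0 : Nat.card (A ⧸ N) • q = 0 := card_nsmul_eq_zero'
    rw [← add_nsmul, show k + 1 + (k + 1) = (2 * k + 1) + 1 by ring, add_nsmul, one_nsmul,
      ← hk, h0, zero_add]
  -- A = 2A + N
  have hdec : ∀ a : A, ∃ b y : A, a = b + b + φ y := by
    intro a
    obtain ⟨r, hr⟩ := hq (QuotientAddGroup.mk a)
    obtain ⟨b, rfl⟩ := QuotientAddGroup.mk_surjective r
    have : QuotientAddGroup.mk (a - (b + b)) = (0 : A ⧸ N) := by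
      rw [← QuotientAddGroup.mk_add] at hr
      rw [QuotientAddGroup.mk_sub]
      rw [hr]; simp
    rw [QuotientAddGroup.eq_zero_iff, hNr, AddMonoidHom.mem_range] at this
    obtain ⟨y, hy⟩ := this
    exact ⟨b, y, by rw [hy]; abel⟩
  -- key: φ (φ y) = φ y + φ y
  have hφφ : ∀ y : A, φ (φ y) = φ y + φ y := by
    intro y
    simp only [hφ, AddMonoidHom.mk'_apply, map_sub, hσ]
    abel
  -- doubling surjective on A
  have hs : Function.Surjective fun a : A => a + a := by
    intro a
    obtain ⟨c, y, hcy⟩ := hdec a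
    obtain ⟨d, z, hdz⟩ := hdec y
    refine ⟨c + φ d + φ z, ?_⟩
    have : φ y = φ d + φ d + (φ z + φ z) := by
      rw [hdz, map_add, map_add, hφφ]
    simp only []
    rw [hcy, this]; abel
  exact aux_fg_double_surj hfg hs
end

section
/- Let Q be a finite group with a central cyclic subgroup H, and set G = Q/H. Then every elementary abelian p-subgroup of G has rank at most 2, provided Q contains no subgroup isomorphic to (ℤ/p) × (ℤ/p). -/
/-- The `n`-torsion subgroup of a commutative group. -/
def torSub (A : Type*) [CommGroup A] (n : ℕ) : Subgroup A where
  carrier := {a | a ^ n = 1}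
  one_mem' := one_pow n
  mul_mem' := fun {a b} ha hb => by
    simp only [Set.mem_setOf_eq] at *
    rw [mul_pow, ha, hb, mul_one]
  inv_mem' := fun {a} ha => by
    simp only [Set.mem_setOf_eq] at *
    rw [inv_pow, ha, inv_one]

lemma mem_torSub {A : Type*} [CommGroup A] {n : ℕ} {a : A} :
    a ∈ torSub A n ↔ a ^ n = 1 := Iff.rfl

lemma mem_zpowers_pow_of_coprime {G : Type*} [Group G] {v : G} {m n : ℕ} (hv : v ^ n = 1)
    (h : Nat.Coprime m n) : v ∈ Subgroup.zpowers (v ^ m) := by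
  refine ⟨Nat.gcdA m n, ?_⟩
  have hb : (1 : ℤ) = m * Nat.gcdA m n + n * Nat.gcdB m n := by
    have := Nat.gcd_eq_gcd_ab m n
    rw [h] at this
    exact_mod_cast this
  have hvz : v ^ (n : ℤ) = 1 := by rw [zpow_natCast, hv]
  calc (v ^ m) ^ Nat.gcdA m n
      = v ^ ((m : ℤ) * Nat.gcdA m n + (n : ℤ) * Nat.gcdB m n) := by
        rw [zpow_add, zpow_mul, zpow_mul, hvz, one_zpow, mul_one, zpow_natCast]
    _ = v ^ (1 : ℤ) := by rw [← hb]
    _ = v := zpow_one v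

lemma card_torSub_pow_le {p : ℕ} (A : Type*) [CommGroup A] [Finite A]
    (hbase : Nat.card (torSub A p) ≤ p) : ∀ k, Nat.card (torSub A (p ^ k)) ≤ p ^ k := by
  intro k
  induction k with
  | zero =>
    have hbot : torSub A (p ^ 0) = ⊥ := by
      ext a
      simp [mem_torSub, Subgroup.mem_bot]
    rw [hbot, pow_zero]
    simp
  | succ k ih =>
    set S := torSub A (p ^ (k + 1)) with hSdef
    let f : S →* A := (powMonoidHom p).comp S.subtype
    have hcard : Nat.card S = Nat.card (S ⧸ f.ker) * Nat.card f.ker :=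
      Subgroup.card_eq_card_quotient_mul_card_subgroup f.ker
    have hq : Nat.card (S ⧸ f.ker) = Nat.card f.range :=
      Nat.card_congr (QuotientGroup.quotientKerEquivRange f).toEquiv
    have hr : f.range ≤ torSub A (p ^ k) := by
      rintro b ⟨a, rfl⟩
      show (a.1 ^ p) ^ p ^ k = 1
      rw [← pow_mul, ← pow_succ']
      exact a.2
    have h1 : Nat.card f.range ≤ p ^ k :=
      le_trans (Subgroup.card_le_of_le hr) ih
    have h2 : Nat.card f.ker ≤ p := by
      have hmem : ∀ x : f.ker, x.1.1 ∈ torSub A p := by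
        rintro ⟨⟨a, haS⟩, hak⟩
        exact hak
      have hinj : Function.Injective (fun x : f.ker => (⟨x.1.1, hmem x⟩ : torSub A p)) := by
        intro x y hxy
        simp only [Subtype.mk.injEq] at hxy
        apply Subtype.ext
        exact Subtype.ext hxy
      exact le_trans (Nat.card_le_card_of_injective _ hinj) hbase
    calc Nat.card S = Nat.card (S ⧸ f.ker) * Nat.card f.ker := hcard
      _ = Nat.card f.range * Nat.card f.ker := by rw [hq]
      _ ≤ p ^ k * p := Nat.mul_le_mul h1 h2
      _ = p ^ (k + 1) := (pow_succ p k).symm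

lemma mem_zpowers_of_cyclic {p : ℕ} {K : Type*} [Group K] [Finite K] [IsCyclic K]
    (hp : p.Prime) {a b : K} (ha : a ^ p = 1) (ha1 : a ≠ 1) (hb : b ^ p = 1) :
    b ∈ Subgroup.zpowers a := by
  classical
  haveI : Fintype K := Fintype.ofFinite K
  have horda : orderOf a = p :=
    ((Nat.dvd_prime hp).1 (orderOf_dvd_of_pow_eq_one ha)).resolve_left
      (by simpa [orderOf_eq_one_iff] using ha1)
  have hsub : ((Subgroup.zpowers a : Subgroup K) : Set K).toFinset ⊆
      Finset.filter (fun x : K => x ^ p = 1) Finset.univ := by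
    intro x hx
    rw [Set.mem_toFinset] at hx
    obtain ⟨n, rfl⟩ := hx
    rw [Finset.mem_filter]
    refine ⟨Finset.mem_univ _, ?_⟩
    rw [← zpow_natCast, ← zpow_mul, mul_comm, zpow_mul, zpow_natCast, ha, one_zpow]
  have hle : (Finset.filter (fun x : K => x ^ p = 1) Finset.univ).card ≤ p := by
    have := IsCyclic.card_pow_eq_one_le (α := K) (n := p) hp.pos
    convert this using 2
  have hcardz : ((Subgroup.zpowers a : Subgroup K) : Set K).toFinset.card = p := by
    rw [Set.toFinset_card]
    have : Fintype.card ((Subgroup.zpowers a : Subgroup K) : Set K) = Nat.card (Subgroup.zpowers a) := by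
      rw [Nat.card_eq_fintype_card]; rfl
    rw [this, Nat.card_zpowers, horda]
  have heq := Finset.eq_of_subset_of_card_le hsub (by rw [hcardz]; exact hle)
  have hbmem : b ∈ Finset.filter (fun x : K => x ^ p = 1) Finset.univ := by
    rw [Finset.mem_filter]; exact ⟨Finset.mem_univ _, hb⟩
  rw [← heq, Set.mem_toFinset] at hbmem
  exact hbmem

section Vfacts
variable {p : ℕ}

lemma V_pow_p (hp : p.Prime) (v : Multiplicative (ZMod p × ZMod p)) : v ^ p = 1 := by
  have h : p • v.toAdd = 0 := by
    ext
    · simp [nsmul_eq_mul, ZMod.natCast_self]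
    · simp [nsmul_eq_mul, ZMod.natCast_self]
  have : (v ^ p).toAdd = 0 := by rw [toAdd_pow]; exact h
  exact toAdd_eq_zero.mp this

lemma V_card (hp : p.Prime) : Nat.card (Multiplicative (ZMod p × ZMod p)) = p * p := by
  haveI : NeZero p := ⟨hp.ne_zero⟩
  rw [Nat.card_eq_of_bijective _ (MulEquiv.toEquiv (MulEquiv.refl _)).bijective]
  simp [Nat.card_prod, Nat.card_zmod]

lemma V_not_cyclic (hp : p.Prime) : ¬ IsCyclic (Multiplicative (ZMod p × ZMod p)) := by
  intro h
  have h1 : Monoid.exponent (Multiplicative (ZMod p × ZMod p)) = p * p :=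
    (IsCyclic.exponent_eq_card (α := Multiplicative (ZMod p × ZMod p))).trans (V_card hp)
  have h2 : Monoid.exponent (Multiplicative (ZMod p × ZMod p)) ∣ p :=
    Monoid.exponent_dvd_of_forall_pow_eq_one (V_pow_p hp)
  rw [h1] at h2
  have := Nat.le_of_dvd hp.pos h2
  nlinarith [hp.two_le]

lemma V_top_of_two_gens (hp : p.Prime) (W : Subgroup (Multiplicative (ZMod p × ZMod p)))
    (h1 : Multiplicative.ofAdd ((1 : ZMod p), (0 : ZMod p)) ∈ W)
    (h2 : Multiplicative.ofAdd ((0 : ZMod p), (1 : ZMod p)) ∈ W) : W = ⊤ := by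
  haveI : NeZero p := ⟨hp.ne_zero⟩
  rw [eq_top_iff]
  rintro g -
  have hg : g = (Multiplicative.ofAdd ((1 : ZMod p), (0 : ZMod p))) ^ (g.toAdd.1.val) *
      (Multiplicative.ofAdd ((0 : ZMod p), (1 : ZMod p))) ^ (g.toAdd.2.val) := by
    apply Multiplicative.toAdd.injective
    rw [toAdd_mul, toAdd_pow, toAdd_pow]
    ext
    · simp [Prod.smul_fst, Prod.smul_snd, nsmul_eq_mul, ZMod.natCast_val, ZMod.cast_id]
    · simp [Prod.smul_fst, Prod.smul_snd, nsmul_eq_mul, ZMod.natCast_val, ZMod.cast_id]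
  rw [hg]
  exact mul_mem (pow_mem h1 _) (pow_mem h2 _)

end Vfacts

/-- Key abelian lemma: a finite commutative group surjecting onto `(ℤ/p)²` contains a
subgroup isomorphic to `(ℤ/p)²`. -/
lemma core_abelian {p : ℕ} (hp : p.Prime) (A : Type*) [CommGroup A] [Finite A]
    (ρ : A →* Multiplicative (ZMod p × ZMod p)) (hsurj : Function.Surjective ρ) :
    ∃ K : Subgroup A, Nonempty (K ≃* Multiplicative (ZMod p × ZMod p)) := by
  haveI : NeZero p := ⟨hp.ne_zero⟩
  by_cases hex : ∃ u : A, u ^ p = 1 ∧ u ≠ 1 ∧ ∃ v : A, v ^ p = 1 ∧ v ∉ Subgroup.zpowers u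
  · obtain ⟨u, hu, hun, v, hv, hvu⟩ := hex
    -- build the homomorphism ZMod p × ZMod p → A
    have hup : (p : ℤ) • Additive.ofMul u = 0 := by
      rw [← ofMul_zpow, zpow_natCast, hu]; rfl
    have hvp : (p : ℤ) • Additive.ofMul v = 0 := by
      rw [← ofMul_zpow, zpow_natCast, hv]; rfl
    let f1 : ZMod p →+ Additive A :=
      ZMod.lift p ⟨zmultiplesHom (Additive A) (Additive.ofMul u), hup⟩
    let f2 : ZMod p →+ Additive A :=
      ZMod.lift p ⟨zmultiplesHom (Additive A) (Additive.ofMul v), hvp⟩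
    have hf1 : ∀ x : ZMod p, f1 x = Additive.ofMul (u ^ x.val) := by
      intro x
      have hx : ((x.val : ℤ) : ZMod p) = x := by
        push_cast
        simp [ZMod.natCast_val, ZMod.cast_id]
      have h1 : f1 (((x.val : ℤ) : ZMod p)) = (x.val : ℤ) • Additive.ofMul u :=
        ZMod.lift_coe p _ _
      rw [hx] at h1
      rw [h1, ← ofMul_zpow, zpow_natCast]
    have hf2 : ∀ x : ZMod p, f2 x = Additive.ofMul (v ^ x.val) := by
      intro x
      have hx : ((x.val : ℤ) : ZMod p) = x := by
        push_cast
        simp [ZMod.natCast_val, ZMod.cast_id]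
      have h1 : f2 (((x.val : ℤ) : ZMod p)) = (x.val : ℤ) • Additive.ofMul v :=
        ZMod.lift_coe p _ _
      rw [hx] at h1
      rw [h1, ← ofMul_zpow, zpow_natCast]
    let h : Multiplicative (ZMod p × ZMod p) →* A :=
      AddMonoidHom.toMultiplicativeLeft (f1.coprod f2)
    have happly : ∀ z : Multiplicative (ZMod p × ZMod p),
        h z = u ^ z.toAdd.1.val * v ^ z.toAdd.2.val := by
      intro z
      show Additive.toMul ((f1.coprod f2) z.toAdd) = _
      rw [AddMonoidHom.coprod_apply, hf1, hf2]
      rfl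
    have hordu : orderOf u = p :=
      ((Nat.dvd_prime hp).1 (orderOf_dvd_of_pow_eq_one hu)).resolve_left
        (by simpa [orderOf_eq_one_iff] using hun)
    have hinj : Function.Injective h := by
      rw [injective_iff_map_eq_one]
      intro z hz
      rw [happly] at hz
      set c := z.toAdd.1 with hcdef
      set d := z.toAdd.2 with hddef
      have hd : d = 0 := by
        by_contra hd0
        have hdval : ¬ p ∣ d.val := by
          intro hdvd
          have : d.val = 0 := Nat.eq_zero_of_dvd_of_lt hdvd (ZMod.val_lt d)
          exact hd0 ((ZMod.val_eq_zero d).mp this)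
        have hcop : Nat.Coprime d.val p := Nat.Coprime.symm ((Nat.Prime.coprime_iff_not_dvd hp).mpr hdval)
        have hvd : v ^ d.val = (u ^ c.val)⁻¹ := by
          rw [eq_inv_iff_mul_eq_one, mul_comm]
          exact hz
        have hmem : v ∈ Subgroup.zpowers u := by
          have h1 : v ∈ Subgroup.zpowers (v ^ d.val) := mem_zpowers_pow_of_coprime hv hcop
          have h2 : Subgroup.zpowers (v ^ d.val) ≤ Subgroup.zpowers u := by
            rw [Subgroup.zpowers_le, hvd]
            exact (Subgroup.zpowers u).inv_mem
              (Subgroup.pow_mem _ (Subgroup.mem_zpowers u) _)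
          exact h2 h1
        exact hvu hmem
      have hc : c = 0 := by
        have hu1 : u ^ c.val = 1 := by
          rw [hd] at hz
          simpa using hz
        have hdvd : p ∣ c.val := by
          have := orderOf_dvd_of_pow_eq_one hu1
          rwa [hordu] at this
        have : c.val = 0 := by
          rcases Nat.eq_zero_or_pos c.val with h | h
          · exact h
          · exact absurd (Nat.le_of_dvd h hdvd) (not_le.mpr (ZMod.val_lt c))
        exact (ZMod.val_eq_zero c).mp this
      have : z.toAdd = 0 := Prod.ext hc hd
      exact toAdd_eq_zero.mp this
    exact ⟨h.range, ⟨(MonoidHom.ofInjective hinj).symm⟩⟩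
  · exfalso
    push_neg at hex
    -- the p-torsion of A has at most p elements
    have hbase : Nat.card (torSub A p) ≤ p := by
      by_cases h1 : ∃ u : A, u ^ p = 1 ∧ u ≠ 1
      · obtain ⟨u, hu, hun⟩ := h1
        have hle : torSub A p ≤ Subgroup.zpowers u := fun w hw => hex u hu hun w hw
        refine le_trans (Subgroup.card_le_of_le hle) ?_
        rw [Nat.card_zpowers]
        exact Nat.le_of_dvd hp.pos (orderOf_dvd_of_pow_eq_one hu)
      · push_neg at h1
        have hbot : torSub A p = ⊥ := by
          rw [eq_bot_iff]
          intro a ha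
          rw [Subgroup.mem_bot]
          exact h1 a ha
        rw [hbot, Subgroup.card_bot]
        exact hp.one_lt.le
    have hN : Nat.card A ≠ 0 := Nat.card_pos.ne'
    set N := Nat.card A with hNdef
    set S := torSub A (p ^ N) with hSdef
    have htor := card_torSub_pow_le A hbase
    haveI : Fintype S := Fintype.ofFinite _
    have hScyc : IsCyclic S := by
      classical
      apply isCyclic_of_card_pow_eq_one_le
      intro n hn
      set k := n.factorization p with hkdef
      have hpk : p ^ k ∣ n := Nat.ordProj_dvd n p
      have hmem : ∀ s : {s : S // s ^ n = 1}, (s.1 : A) ∈ torSub A (p ^ k) := by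
        rintro ⟨⟨a, haS⟩, han⟩
        have ha1 : a ^ n = 1 := by
          have := congrArg Subtype.val han
          simpa using this
        have ha2 : a ^ (p ^ N) = 1 := haS
        obtain ⟨j, hjN, hordj⟩ := (Nat.dvd_prime_pow hp).1 (orderOf_dvd_of_pow_eq_one ha2)
        have hjk : j ≤ k := by
          rw [hkdef]
          rw [← Nat.Prime.pow_dvd_iff_le_factorization hp hn.ne']
          rw [← hordj]
          exact orderOf_dvd_of_pow_eq_one ha1
        show a ^ (p ^ k) = 1
        apply orderOf_dvd_iff_pow_eq_one.mp
        rw [hordj]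
        exact pow_dvd_pow p hjk
      have hinj : Function.Injective
          (fun s : {s : S // s ^ n = 1} => (⟨(s.1 : A), hmem s⟩ : torSub A (p ^ k))) := by
        rintro ⟨⟨a, haS⟩, han⟩ ⟨⟨b, hbS⟩, hbn⟩ hab
        simp only [Subtype.mk.injEq] at hab
        apply Subtype.ext
        apply Subtype.ext
        exact hab
      have hcount : Fintype.card {s : S // s ^ n = 1} ≤ p ^ k := by
        rw [← Nat.card_eq_fintype_card]
        exact le_trans (Nat.card_le_card_of_injective _ hinj) (htor k)
      have hfil : (Finset.filter (fun s : S => s ^ n = 1) Finset.univ).card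
          = Fintype.card {s : S // s ^ n = 1} := (Fintype.card_subtype _).symm
      calc (Finset.filter (fun s : S => s ^ n = 1) Finset.univ).card
          = Fintype.card {s : S // s ^ n = 1} := hfil
        _ ≤ p ^ k := hcount
        _ ≤ n := Nat.le_of_dvd hn hpk
    -- the image of S under ρ is everything
    have hmap : S.map ρ = ⊤ := by
      rw [eq_top_iff]
      rintro w -
      obtain ⟨a, rfl⟩ := hsurj w
      set e := N.factorization p with hedef
      set m := N / p ^ e with hmdef
      have hpm : p ^ e * m = N := Nat.ordProj_mul_ordCompl_eq_self N p
      have he : e ≤ N := le_of_lt (Nat.factorization_lt p hN)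
      have hm : a ^ m ∈ S := by
        show (a ^ m) ^ p ^ N = 1
        rw [← pow_mul]
        have hmul : m * p ^ N = N * p ^ (N - e) := by
          calc m * p ^ N = m * (p ^ e * p ^ (N - e)) := by
                rw [← pow_add, Nat.add_sub_cancel' he]
            _ = (p ^ e * m) * p ^ (N - e) := by ring
            _ = N * p ^ (N - e) := by rw [hpm]
        rw [hmul, pow_mul, hNdef, pow_card_eq_one', one_pow]
      have hvm : (ρ a) ^ m ∈ S.map ρ := ⟨a ^ m, hm, map_pow ρ a m⟩
      have hcop : Nat.Coprime m p := (Nat.coprime_ordCompl hp hN).symm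
      have hz := mem_zpowers_pow_of_coprime (V_pow_p hp (ρ a)) hcop
      exact Subgroup.zpowers_le.mpr hvm hz
    let ρ' := ρ.comp S.subtype
    have hρ' : Function.Surjective ρ' := by
      intro w
      have hw : w ∈ S.map ρ := by rw [hmap]; trivial
      obtain ⟨s, hs, rfl⟩ := hw
      exact ⟨⟨s, hs⟩, rfl⟩
    exact V_not_cyclic hp (isCyclic_of_surjective ρ' hρ')

open scoped commutatorElement

section Commutators
variable {Q : Type*} [Group Q]

lemma conj_pow_of_central {a b : Q} (h : ∀ z, ⁅a, b⁆ * z = z * ⁅a, b⁆) (n : ℕ) :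
    a * b ^ n * a⁻¹ = ⁅a, b⁆ ^ n * b ^ n := by
  induction n with
  | zero => simp
  | succ n ih =>
    have habc : a * b * a⁻¹ = ⁅a, b⁆ * b := by
      rw [commutatorElement_def]; group
    have hsplit : a * b ^ (n + 1) * a⁻¹ = (a * b ^ n * a⁻¹) * (a * b * a⁻¹) := by
      rw [pow_succ]; group
    rw [hsplit, ih, habc]
    calc ⁅a, b⁆ ^ n * b ^ n * (⁅a, b⁆ * b)
        = ⁅a, b⁆ ^ n * (b ^ n * ⁅a, b⁆) * b := by group
      _ = ⁅a, b⁆ ^ n * (⁅a, b⁆ * b ^ n) * b := by rw [h (b ^ n)]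
      _ = ⁅a, b⁆ ^ (n + 1) * b ^ (n + 1) := by rw [pow_succ, pow_succ]; group

lemma comm_pow_right {a b : Q} (h : ∀ z, ⁅a, b⁆ * z = z * ⁅a, b⁆) (n : ℕ) :
    ⁅a, b ^ n⁆ = ⁅a, b⁆ ^ n := by
  have key := conj_pow_of_central h n
  have : ⁅a, b ^ n⁆ = (a * b ^ n * a⁻¹) * (b ^ n)⁻¹ := by
    exact commutatorElement_def a (b ^ n)
  rw [this, key]; group

lemma comm_mul_right {a b c : Q} (hc : ∀ z, ⁅a, c⁆ * z = z * ⁅a, c⁆) :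
    ⁅a, b * c⁆ = ⁅a, b⁆ * ⁅a, c⁆ := by
  have key : ⁅a, b * c⁆ = a * b * a⁻¹ * b⁻¹ * (b * (a * c * a⁻¹ * c⁻¹) * b⁻¹) := by
    rw [commutatorElement_def]; group
  have hconj : b * ⁅a, c⁆ * b⁻¹ = ⁅a, c⁆ := by
    rw [← hc b]; group
  rw [key, show b * (a * c * a⁻¹ * c⁻¹) * b⁻¹ = b * ⁅a, c⁆ * b⁻¹ from by
    rw [commutatorElement_def], hconj, commutatorElement_def, commutatorElement_def]

end Commutators

/-- The finishing lemma: from a commuting pair in `Q` projecting to "independent coordinates"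
in the elementary abelian subgroup `E`, produce a contradiction with `hQ`. -/
lemma finish_lemma {p : ℕ} (hp : p.Prime) {Q G : Type*} [Group Q] [Finite Q] [Group G]
    (φ : Q →* G)
    (hQ : ¬∃ K : Subgroup Q, Nonempty (K ≃* Multiplicative (ZMod p × ZMod p)))
    {E : Subgroup G} {r : ℕ} (e : E ≃* Multiplicative (Fin r → ZMod p))
    (x y : Q) (hc : x * y = y * x) (u v : E) (hx : φ x = u) (hy : φ y = v)
    (i j : Fin r) (hui : (e u).toAdd i = 1) (huj : (e u).toAdd j = 0)
    (hvi : (e v).toAdd i = 0) (hvj : (e v).toAdd j = 1) : False := by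
  apply hQ
  set A := Subgroup.closure ({x, y} : Set Q) with hA
  have hxA : x ∈ A := Subgroup.subset_closure (Set.mem_insert x {y})
  have hyA : y ∈ A := Subgroup.subset_closure (Set.mem_insert_of_mem x rfl)
  have hcomm : ∀ (a b : Q), a ∈ A → b ∈ A → a * b = b * a := by
    intro a b ha hb
    refine Subgroup.closure_induction₂ ?_ ?_ ?_ ?_ ?_ ?_ ?_ ha hb
    · rintro s t (rfl | rfl) (rfl | rfl)
      · rfl
      · exact hc
      · exact hc.symm
      · rfl
    · intro z _; rw [one_mul, mul_one]
    · intro z _; rw [one_mul, mul_one]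
    · intro a' b' z _ _ _ h1 h2
      rw [mul_assoc, h2, ← mul_assoc, h1, mul_assoc]
    · intro a' b' z _ _ _ h1 h2
      rw [← mul_assoc, h1, mul_assoc, h2, ← mul_assoc]
    · intro a' z _ _ h1
      calc a'⁻¹ * z = a'⁻¹ * z * a' * a'⁻¹ := by group
        _ = a'⁻¹ * (a' * z) * a'⁻¹ := by rw [mul_assoc a'⁻¹ z a', ← h1]
        _ = z * a'⁻¹ := by group
    · intro a' z _ _ h1
      calc a' * z⁻¹ = z⁻¹ * (z * a') * z⁻¹ := by group
        _ = z⁻¹ * (a' * z) * z⁻¹ := by rw [← h1]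
        _ = z⁻¹ * a' := by group
  letI : CommGroup A :=
    { (inferInstance : Group A) with
      mul_comm := fun a b => Subtype.ext (hcomm a.1 b.1 a.2 b.2) }
  have hle : A ≤ E.comap φ := by
    rw [hA, Subgroup.closure_le]
    rintro s (rfl | rfl)
    · show φ s ∈ E
      rw [hx]; exact u.2
    · show φ s ∈ E
      rw [hy]; exact v.2
  let φ' : A →* E := MonoidHom.codRestrict (φ.comp A.subtype) E (fun a => hle a.2)
  let π : (Fin r → ZMod p) →+ (ZMod p × ZMod p) :=
    (Pi.evalAddMonoidHom (fun _ => ZMod p) i).prod (Pi.evalAddMonoidHom (fun _ => ZMod p) j)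
  let ρ : A →* Multiplicative (ZMod p × ZMod p) :=
    (AddMonoidHom.toMultiplicative π).comp (e.toMonoidHom.comp φ')
  have hρx : ρ ⟨x, hxA⟩ = Multiplicative.ofAdd ((1 : ZMod p), (0 : ZMod p)) := by
    have h1 : φ' ⟨x, hxA⟩ = u := Subtype.ext hx
    show (AddMonoidHom.toMultiplicative π) (e (φ' ⟨x, hxA⟩)) = _
    rw [h1]
    apply Multiplicative.toAdd.injective
    show π (e u).toAdd = ((1 : ZMod p), (0 : ZMod p))
    exact Prod.ext hui huj
  have hρy : ρ ⟨y, hyA⟩ = Multiplicative.ofAdd ((0 : ZMod p), (1 : ZMod p)) := by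
    have h1 : φ' ⟨y, hyA⟩ = v := Subtype.ext hy
    show (AddMonoidHom.toMultiplicative π) (e (φ' ⟨y, hyA⟩)) = _
    rw [h1]
    apply Multiplicative.toAdd.injective
    show π (e v).toAdd = ((0 : ZMod p), (1 : ZMod p))
    exact Prod.ext hvi hvj
  have hsurj : Function.Surjective ρ := by
    rw [← MonoidHom.range_eq_top]
    exact V_top_of_two_gens hp ρ.range ⟨⟨x, hxA⟩, hρx⟩ ⟨⟨y, hyA⟩, hρy⟩
  obtain ⟨K, ⟨ι⟩⟩ := core_abelian hp A ρ hsurj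
  refine ⟨K.map A.subtype, ⟨?_⟩⟩
  exact (Subgroup.equivMapOfInjective K A.subtype A.subtype_injective).symm.trans ι

/-- Let `Q` be a finite group with a central cyclic subgroup `H = ker φ` and
`G = Q/H` (presented via a surjection `φ : Q →* G` with central cyclic kernel). If `Q` has
no subgroup isomorphic to `(ℤ/p) × (ℤ/p)`, then every elementary abelian `p`-subgroup of
`G` has rank at most 2. -/
theorem stmt_15 (p : ℕ) (hp : p.Prime) (Q G : Type*) [Group Q] [Finite Q] [Group G]
    (φ : Q →* G) (hφ : Function.Surjective φ)
    (hcent : φ.ker ≤ Subgroup.center Q) (hcyc : IsCyclic φ.ker)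
    (hQ : ¬∃ K : Subgroup Q, Nonempty (K ≃* Multiplicative (ZMod p × ZMod p))) :
    ∀ (E : Subgroup G) (r : ℕ),
      Nonempty (E ≃* Multiplicative (Fin r → ZMod p)) → r ≤ 2 := by
  intro E r hne
  obtain ⟨e⟩ := hne
  by_contra hr
  push_neg at hr
  haveI : NeZero p := ⟨hp.ne_zero⟩
  haveI := hcyc
  set i0 : Fin r := ⟨0, by omega⟩ with hi0
  set i1 : Fin r := ⟨1, by omega⟩ with hi1
  set i2 : Fin r := ⟨2, by omega⟩ with hi2
  have h10 : i1 ≠ i0 := by simp [hi0, hi1, Fin.ext_iff]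
  have h20 : i2 ≠ i0 := by simp [hi0, hi2, Fin.ext_iff]
  have h01 : i0 ≠ i1 := h10.symm
  have h21 : i2 ≠ i1 := by simp [hi1, hi2, Fin.ext_iff]
  set g : Fin r → E := fun i => e.symm (Multiplicative.ofAdd (Pi.single i 1)) with hgdef
  have hg : ∀ i, e (g i) = Multiplicative.ofAdd (Pi.single i (1 : ZMod p)) :=
    fun i => e.apply_symm_apply _
  have hsingle : ∀ i : Fin r, p • (Pi.single i (1 : ZMod p) : Fin r → ZMod p) = 0 := by
    intro i
    funext k
    simp only [Pi.smul_apply, Pi.zero_apply, Pi.single_apply]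
    split_ifs <;> simp [nsmul_eq_mul, ZMod.natCast_self]
  have hgp : ∀ i : Fin r, (g i) ^ p = 1 := by
    intro i
    apply e.injective
    rw [map_pow, hg, map_one, ← ofAdd_nsmul, hsingle]
    rfl
  obtain ⟨q0, hq0⟩ := hφ (g i0 : G)
  obtain ⟨q1, hq1⟩ := hφ (g i1 : G)
  obtain ⟨q2, hq2⟩ := hφ (g i2 : G)
  have hEc : ∀ a b : E, a * b = b * a := fun a b =>
    e.injective (by rw [map_mul, map_mul, mul_comm])
  have hkerc : ∀ (a b : Q) (a' b' : E), φ a = a' → φ b = b' → ⁅a, b⁆ ∈ φ.ker := by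
    intro a b a' b' ha hb
    rw [MonoidHom.mem_ker, map_commutatorElement, ha, hb,
      commutatorElement_eq_one_iff_commute]
    exact Commute.map (hEc a' b' : Commute a' b') E.subtype
  have hcen : ∀ w ∈ φ.ker, ∀ z : Q, w * z = z * w := fun w hw z =>
    (Subgroup.mem_center_iff.mp (hcent hw) z).symm
  have hpow : ∀ (i : Fin r) (q : Q), φ q = (g i : G) → q ^ p ∈ φ.ker := by
    intro i q hq
    rw [MonoidHom.mem_ker, map_pow, hq]
    have : ((g i : G)) ^ p = (((g i) ^ p : E) : G) := by norm_cast
    rw [this, hgp i]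
    rfl
  set c01 := ⁅q0, q1⁆ with hc01def
  set c02 := ⁅q0, q2⁆ with hc02def
  have hk01 : c01 ∈ φ.ker := hkerc _ _ _ _ hq0 hq1
  have hk02 : c02 ∈ φ.ker := hkerc _ _ _ _ hq0 hq2
  have hc01z : ∀ z, c01 * z = z * c01 := hcen _ hk01
  have hc02z : ∀ z, c02 * z = z * c02 := hcen _ hk02
  have hc01p : c01 ^ p = 1 := by
    rw [hc01def, ← comm_pow_right hc01z p, commutatorElement_eq_one_iff_commute]
    exact (Subgroup.mem_center_iff.mp (hcent (hpow i1 q1 hq1)) q0 : Commute q0 (q1 ^ p))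
  have hc02p : c02 ^ p = 1 := by
    rw [hc02def, ← comm_pow_right hc02z p, commutatorElement_eq_one_iff_commute]
    exact (Subgroup.mem_center_iff.mp (hcent (hpow i2 q2 hq2)) q0 : Commute q0 (q2 ^ p))
  by_cases hc01 : c01 = 1
  · -- q0 and q1 commute
    refine finish_lemma hp φ hQ e q0 q1
      (commutatorElement_eq_one_iff_commute.mp hc01) (g i0) (g i1) hq0 hq1 i0 i1 ?_ ?_ ?_ ?_
    · rw [hg, toAdd_ofAdd]; exact Pi.single_eq_same i0 1
    · rw [hg, toAdd_ofAdd]; exact Pi.single_eq_of_ne h10 1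
    · rw [hg, toAdd_ofAdd]; exact Pi.single_eq_of_ne h01 1
    · rw [hg, toAdd_ofAdd]; exact Pi.single_eq_same i1 1
  · set k01 : φ.ker := ⟨c01, hk01⟩ with hk01def
    set k02 : φ.ker := ⟨c02, hk02⟩ with hk02def
    have hk01p : k01 ^ p = 1 := by
      apply Subtype.ext
      push_cast [hk01def]
      exact hc01p
    have hk02p : k02 ^ p = 1 := by
      apply Subtype.ext
      push_cast [hk02def]
      exact hc02p
    have hk01ne : k01 ≠ 1 := fun h => hc01 (congrArg Subtype.val h)
    have hmem := mem_zpowers_of_cyclic hp hk01p hk01ne hk02p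
    rw [← mem_powers_iff_mem_zpowers] at hmem
    obtain ⟨n, hn⟩ := (Submonoid.mem_powers_iff _ _).mp hmem
    have hc02eq : c01 ^ n = c02 := by
      have := congrArg Subtype.val hn
      push_cast [hk01def, hk02def] at this
      exact this
    set α := p - n % p with hα
    set y := q1 ^ α * q2 with hy
    have hsum : α + n = p * (1 + n / p) := by
      have hmod := Nat.div_add_mod n p
      have hlt : n % p < p := Nat.mod_lt _ hp.pos
      calc α + n = (p - n % p) + (p * (n / p) + n % p) := by rw [hα, hmod]
        _ = p * (n / p) + ((p - n % p) + n % p) := by omega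
        _ = p * (n / p) + p := by rw [Nat.sub_add_cancel hlt.le]
        _ = p * (1 + n / p) := by ring
    have hcomm0y : q0 * y = y * q0 := by
      have h1 : ⁅q0, y⁆ = c01 ^ α * c02 := by
        rw [hy, comm_mul_right hc02z, comm_pow_right hc01z]
      have h2 : ⁅q0, y⁆ = 1 := by
        rw [h1, ← hc02eq, ← pow_add, hsum, pow_mul, hc01p, one_pow]
      exact commutatorElement_eq_one_iff_commute.mp h2
    set v : E := (g i1) ^ α * (g i2) with hv
    have hφy : φ y = (v : G) := by
      rw [hy, map_mul, map_pow, hq1, hq2, hv]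
      push_cast
      rfl
    have hev : e v = Multiplicative.ofAdd
        (α • (Pi.single i1 (1 : ZMod p) : Fin r → ZMod p) + Pi.single i2 (1 : ZMod p)) := by
      rw [hv, map_mul, map_pow, hg, hg, ← ofAdd_nsmul, ← ofAdd_add]
    refine finish_lemma hp φ hQ e q0 y hcomm0y (g i0) v hq0 hφy i0 i2 ?_ ?_ ?_ ?_
    · rw [hg, toAdd_ofAdd]; exact Pi.single_eq_same i0 1
    · rw [hg, toAdd_ofAdd]; exact Pi.single_eq_of_ne h20 1
    · rw [hev, toAdd_ofAdd]
      simp [Pi.single_eq_of_ne h01, Pi.single_eq_of_ne h20.symm]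
    · rw [hev, toAdd_ofAdd]
      simp [Pi.single_eq_of_ne h21, Pi.single_eq_same]
end
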